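/- arXiv:1603.09651 — 3 statements merged into one kernel-verified Lean document; each statement's English description precedes it below -/
import Mathlib

section
/- Let H be a ≤-hypergroupoid. If A is a left (resp. right) ideal of H, then the characteristic function f_A is a fuzzy left (resp. fuzzy right) ideal of H. -/
/-- The induced operation `A*B = ⋃_{(a,b) ∈ A×B} a∘b` on subsets of a hypergroupoid. -/
def hProd {H : Type*} (circ : H → H → Set H) (A B : Set H) : Set H :=
  {x | ∃ a ∈ A, ∃ b ∈ B, x ∈ circ a b}

/-- A (nonempty) subset `A` is a left ideal of the ≤-hypergroupoid:
`H*A ⊆ A` and `A` is downward closed under `le`. -/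
def IsLeftIdeal {H : Type*} (circ : H → H → Set H) (le : H → H → Prop) (A : Set H) : Prop :=
  A.Nonempty ∧ hProd circ Set.univ A ⊆ A ∧ ∀ a ∈ A, ∀ b : H, le b a → b ∈ A

def IsRightIdeal {H : Type*} (circ : H → H → Set H) (le : H → H → Prop) (A : Set H) : Prop :=
  A.Nonempty ∧ hProd circ A Set.univ ⊆ A ∧ ∀ a ∈ A, ∀ b : H, le b a → b ∈ A

def IsIdeal {H : Type*} (circ : H → H → Set H) (le : H → H → Prop) (A : Set H) : Prop :=
  IsLeftIdeal circ le A ∧ IsRightIdeal circ le A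

def IsSubgroupoid {H : Type*} (circ : H → H → Set H) (A : Set H) : Prop :=
  A.Nonempty ∧ hProd circ A A ⊆ A

def IsPrimeSubset {H : Type*} (circ : H → H → Set H) (I : Set H) : Prop :=
  I.Nonempty ∧ (∀ a b : H, circ a b ⊆ I → a ∈ I ∨ b ∈ I) ∧
    (∀ a b : H, circ a b ⊆ I ∨ circ a b ∩ I = ∅)

def IsPrimeIdeal {H : Type*} (circ : H → H → Set H) (le : H → H → Prop) (A : Set H) : Prop :=
  IsIdeal circ le A ∧ IsPrimeSubset circ A

def IsSemiprimeSubset {H : Type*} (circ : H → H → Set H) (I : Set H) : Prop :=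
  I.Nonempty ∧ (∀ a : H, circ a a ⊆ I → a ∈ I) ∧
    (∀ a : H, circ a a ⊆ I ∨ circ a a ∩ I = ∅)

def IsSemiprimeIdeal {H : Type*} (circ : H → H → Set H) (le : H → H → Prop) (A : Set H) : Prop :=
  IsIdeal circ le A ∧ IsSemiprimeSubset circ A

/-- A fuzzy subset of `H` is a map into `[0,1]`. -/
def IsFuzzySubset {H : Type*} (f : H → ℝ) : Prop := ∀ x, f x ∈ Set.Icc (0 : ℝ) 1

open Classical in
/-- The characteristic function of a subset. -/
noncomputable def charFun {H : Type*} (A : Set H) : H → ℝ := fun x => if x ∈ A then 1 else 0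

def FuzzyLeftIdeal {H : Type*} (circ : H → H → Set H) (le : H → H → Prop) (f : H → ℝ) : Prop :=
  (∀ x y : H, le x y → f y ≤ f x) ∧ ∀ x y : H, ∀ u ∈ circ x y, f y ≤ f u

def FuzzyRightIdeal {H : Type*} (circ : H → H → Set H) (le : H → H → Prop) (f : H → ℝ) : Prop :=
  (∀ x y : H, le x y → f y ≤ f x) ∧ ∀ x y : H, ∀ u ∈ circ x y, f x ≤ f u

def FuzzyIdeal {H : Type*} (circ : H → H → Set H) (le : H → H → Prop) (f : H → ℝ) : Prop :=
  FuzzyLeftIdeal circ le f ∧ FuzzyRightIdeal circ le f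

def FuzzyPrimeSubset {H : Type*} (circ : H → H → Set H) (f : H → ℝ) : Prop :=
  ∀ x y : H, ∀ u ∈ circ x y, f u ≤ max (f x) (f y)

def FuzzyPrimeIdeal {H : Type*} (circ : H → H → Set H) (le : H → H → Prop) (f : H → ℝ) : Prop :=
  FuzzyIdeal circ le f ∧ FuzzyPrimeSubset circ f

def FuzzySemiprimeSubset {H : Type*} (circ : H → H → Set H) (f : H → ℝ) : Prop :=
  ∀ x : H, ∀ u ∈ circ x x, f u ≤ f x

def FuzzySemiprimeIdeal {H : Type*} (circ : H → H → Set H) (le : H → H → Prop) (f : H → ℝ) : Prop :=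
  FuzzyIdeal circ le f ∧ FuzzySemiprimeSubset circ f

theorem stmt_7 {H : Type*} [Nonempty H] (circ : H → H → Set H)
    (hne : ∀ a b : H, (circ a b).Nonempty) (le : H → H → Prop) (A : Set H) :
    (IsLeftIdeal circ le A → FuzzyLeftIdeal circ le (charFun A)) ∧
    (IsRightIdeal circ le A → FuzzyRightIdeal circ le (charFun A)) := by
  constructor
  · rintro ⟨-, hH, hdown⟩
    constructor
    · intro x y hxy
      unfold charFun
      split <;> split <;> norm_num
      exact absurd (hdown _ ‹_› _ hxy) ‹_›
    · intro x y u hu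
      unfold charFun
      split <;> split <;> norm_num
      exact absurd (hH ⟨x, trivial, y, ‹_›, hu⟩) ‹_›
  · rintro ⟨-, hH, hdown⟩
    constructor
    · intro x y hxy
      unfold charFun
      split <;> split <;> norm_num
      exact absurd (hdown _ ‹_› _ hxy) ‹_›
    · intro x y u hu
      unfold charFun
      split <;> split <;> norm_num
      exact absurd (hH ⟨x, ‹_›, y, trivial, hu⟩) ‹_›
end

section
/- Let H be a ≤-hypergroupoid. If A is a prime ideal of H, then the characteristic function f_A is a fuzzy prime ideal of H. -/
theorem stmt_11 {H : Type*} [Nonempty H] (circ : H → H → Set H)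
    (hne : ∀ a b : H, (circ a b).Nonempty) (le : H → H → Prop)
    (A : Set H) (hA : IsPrimeIdeal circ le A) :
    FuzzyPrimeIdeal circ le (charFun A) := by
  obtain ⟨⟨⟨_, hL, hdown⟩, ⟨_, hR, _⟩⟩, _, hprime, hmeet⟩ := hA
  have hle : ∀ x y : H, x ∈ A → (charFun A x : ℝ) ≤ charFun A y → y ∈ A := by
    intro x y hx h
    simp [charFun, hx] at h
    by_contra hy
    simp [charFun, hy] at h
    linarith
  have key : ∀ x y : H, ∀ u ∈ circ x y, y ∈ A → u ∈ A := by
    intro x y u hu hy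
    exact hL ⟨x, trivial, y, hy, hu⟩
  have keyr : ∀ x y : H, ∀ u ∈ circ x y, x ∈ A → u ∈ A := by
    intro x y u hu hx
    exact hR ⟨x, hx, y, trivial, hu⟩
  have mono : ∀ x y : H, le x y → charFun A y ≤ charFun A x := by
    intro x y h
    by_cases hy : y ∈ A
    · simp [charFun, hy, hdown y hy x h]
    · simp [charFun, hy]; positivity
  refine ⟨⟨⟨mono, ?_⟩, mono, ?_⟩, ?_⟩
  · intro x y u hu
    by_cases hy : y ∈ A
    · simp [charFun, hy, key x y u hu hy]
    · simp [charFun, hy]; positivity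
  · intro x y u hu
    by_cases hx : x ∈ A
    · simp [charFun, hx, keyr x y u hu hx]
    · simp [charFun, hx]; positivity
  · intro x y u hu
    by_cases huA : u ∈ A
    · have hsub : circ x y ⊆ A := by
        rcases hmeet x y with h | h
        · exact h
        · exact absurd (Set.eq_empty_iff_forall_notMem.mp h u ⟨hu, huA⟩) (by simp)
      rcases hprime x y hsub with h | h
      · simp [charFun, huA, h]
      · simp [charFun, huA, h]
    · have : (0:ℝ) ≤ charFun A x := by unfold charFun; positivity
      simp only [charFun, huA, if_false]
      exact le_max_of_le_left this
end

section
/- Let H be a ≤-hypergroupoid and A a nonempty subset of H such that the characteristic function f_A is a fuzzy semiprime ideal of H. Then A is a semiprime ideal of H. -/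
lemma charFun_mem_of_le {H : Type*} {A : Set H} {x y : H}
    (hx : x ∈ A) (h : charFun A x ≤ charFun A y) : y ∈ A := by
  by_contra hy
  simp [charFun, hx, hy] at h
  linarith

theorem stmt_18 {H : Type*} [Nonempty H] (circ : H → H → Set H)
    (hne : ∀ a b : H, (circ a b).Nonempty) (le : H → H → Prop)
    (A : Set H) (hA : A.Nonempty)
    (h : FuzzySemiprimeIdeal circ le (charFun A)) :
    IsSemiprimeIdeal circ le A := by
  obtain ⟨⟨⟨hl1, hl2⟩, ⟨hr1, hr2⟩⟩, hsp⟩ := h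
  have hdown : ∀ a ∈ A, ∀ b : H, le b a → b ∈ A := by
    intro a ha b hba
    exact charFun_mem_of_le ha (hl1 b a hba)
  refine ⟨⟨⟨hA, ?_, hdown⟩, ⟨hA, ?_, hdown⟩⟩, hA, ?_, ?_⟩
  · rintro x ⟨a, -, b, hb, hx⟩
    exact charFun_mem_of_le hb (hl2 a b x hx)
  · rintro x ⟨a, ha, b, -, hx⟩
    exact charFun_mem_of_le ha (hr2 a b x hx)
  · intro a hsub
    obtain ⟨u, hu⟩ := hne a a
    exact charFun_mem_of_le (hsub hu) (hsp a u hu)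
  · intro a
    by_cases hd : (circ a a ∩ A) = ∅
    · exact Or.inr hd
    · left
      obtain ⟨u, hu, huA⟩ := Set.nonempty_iff_ne_empty.2 hd
      have haA : a ∈ A := charFun_mem_of_le huA (hsp a u hu)
      intro v hv
      exact charFun_mem_of_le haA (hr2 a a v hv)
end
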